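/- In a para-Hermitian vector space W with eigenspace decomposition W = W₊ ⊕ W₋ of F, for any Dirac subspace L one has ker(ω|_L) = (W₊ ∩ L) ⊕ (W₋ ∩ L), where ω(X,Y) = g(FX,Y); equivalently, ker(ω|_L) = L ∩ F(L). -/

import Mathlib

open Module Submodule

/-- In a para-Hermitian vector space `(W, g, F)` of dimension `2n` with eigenspace
decomposition `W = W₊ ⊕ W₋` of `F`, for any Dirac (maximal `g`-isotropic) subspace `L`
one has `ker(ω|_L) = (W₊ ∩ L) ⊕ (W₋ ∩ L)`, where `ω(X,Y) = g(FX,Y)`; equivalently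
`ker(ω|_L) = L ∩ F(L)`. -/
theorem dirac_kernel_of_restricted_two_form
    {W : Type*} [AddCommGroup W] [Module ℝ W] [FiniteDimensional ℝ W] (n : ℕ)
    (hdim : finrank ℝ W = 2 * n)
    (g : W →ₗ[ℝ] W →ₗ[ℝ] ℝ)
    (hsymm : ∀ x y, g x y = g y x)
    (hnondeg : ∀ x, (∀ y, g x y = 0) → x = 0)
    (F : W →ₗ[ℝ] W)
    (hFF : ∀ x, F (F x) = x)
    (hgF : ∀ x y, g (F x) (F y) = - g x y)
    (L : Submodule ℝ W)
    (hiso : ∀ x ∈ L, ∀ y ∈ L, g x y = 0)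
    (hLdim : finrank ℝ L = n)
    (Wp Wm : Submodule ℝ W)
    (hWp : Wp = LinearMap.ker (F - LinearMap.id))
    (hWm : Wm = LinearMap.ker (F + LinearMap.id)) :
    ∀ x : W,
      ((x ∈ L ∧ ∀ y ∈ L, g (F x) y = 0) ↔ x ∈ (Wp ⊓ L) ⊔ (Wm ⊓ L)) ∧
      ((x ∈ L ∧ ∀ y ∈ L, g (F x) y = 0) ↔ x ∈ L ⊓ Submodule.map F L) := by
  -- g as a bilinear form
  have hrefl : LinearMap.BilinForm.IsRefl g := fun x y h => by
    rw [hsymm]; exact h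
  have hnd : LinearMap.BilinForm.Nondegenerate g :=
    (LinearMap.IsRefl.nondegenerate_iff_separatingLeft (B := g) hrefl).2 (fun x h => hnondeg x h)
  -- L equals its own orthogonal
  have hle : L ≤ LinearMap.BilinForm.orthogonal g L := by
    intro x hx
    rw [LinearMap.BilinForm.mem_orthogonal_iff]
    intro y hy
    exact hiso y hy x hx
  have horth : LinearMap.BilinForm.orthogonal g L = L := by
    symm
    apply eq_of_le_of_finrank_le hle
    rw [LinearMap.BilinForm.finrank_orthogonal hnd, hdim, hLdim]
    omega
  -- kernel condition ↔ F x ∈ L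
  have hker : ∀ x : W, (∀ y ∈ L, g (F x) y = 0) ↔ F x ∈ L := by
    intro x
    constructor
    · intro h
      rw [← horth, LinearMap.BilinForm.mem_orthogonal_iff]
      intro y hy
      show (g y) (F x) = 0
      rw [hsymm]
      exact h y hy
    · intro h y hy
      exact hiso (F x) h y hy
  intro x
  have hmapF : x ∈ Submodule.map F L ↔ F x ∈ L := by
    constructor
    · rintro ⟨y, hy, rfl⟩
      rw [hFF]; exact hy
    · intro h
      exact ⟨F x, h, hFF x⟩
  constructor
  · constructor
    · rintro ⟨hxL, hk⟩
      have hFxL : F x ∈ L := (hker x).1 hk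
      rw [Submodule.mem_sup]
      have h1 : F ((1/2 : ℝ) • (x + F x)) = (1/2 : ℝ) • (x + F x) := by
        rw [map_smul, map_add, hFF, add_comm]
      have h2 : F ((1/2 : ℝ) • (x - F x)) = -((1/2 : ℝ) • (x - F x)) := by
        have hx2 : F (x - F x) = -(x - F x) := by
          rw [map_sub, hFF]; abel
        rw [map_smul, hx2, smul_neg]
      refine ⟨(1/2 : ℝ) • (x + F x), ⟨?_, ?_⟩, (1/2 : ℝ) • (x - F x), ⟨?_, ?_⟩, ?_⟩
      · rw [hWp]
        simp only [SetLike.mem_coe, LinearMap.mem_ker, LinearMap.sub_apply, LinearMap.id_apply,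
          h1, sub_self]
      · exact Submodule.smul_mem _ _ (Submodule.add_mem _ hxL hFxL)
      · rw [hWm]
        simp only [SetLike.mem_coe, LinearMap.mem_ker, LinearMap.add_apply, LinearMap.id_apply,
          h2, neg_add_cancel]
      · exact Submodule.smul_mem _ _ (Submodule.sub_mem _ hxL hFxL)
      · rw [← smul_add]
        have : x + F x + (x - F x) = (2 : ℝ) • x := by
          rw [two_smul]; abel
        rw [this, smul_smul]
        norm_num
    · intro hx
      rw [Submodule.mem_sup] at hx
      obtain ⟨a, ⟨haWp, haL⟩, b, ⟨hbWm, hbL⟩, rfl⟩ := hx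
      rw [hWp] at haWp
      rw [hWm] at hbWm
      simp only [SetLike.mem_coe, LinearMap.mem_ker] at haWp hbWm
      have hFa : F a = a := by
        have := haWp
        simp only [LinearMap.sub_apply, LinearMap.id_apply, sub_eq_zero] at this
        exact this
      have hFb : F b = -b := by
        have := hbWm
        simp only [LinearMap.add_apply, LinearMap.id_apply, add_eq_zero_iff_eq_neg] at this
        exact this
      refine ⟨Submodule.add_mem _ haL hbL, (hker _).2 ?_⟩
      rw [map_add, hFa, hFb]
      exact Submodule.add_mem _ haL (Submodule.neg_mem _ hbL)
  · rw [Submodule.mem_inf, hmapF, hker x]
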